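/- Completeness of S-resolution: if Pr(Q : φ) = p for an SSAT formula Q : φ with φ in CNF, then the annotated empty clause ∅^p is derivable from Q : φ by S-resolution. -/

import Mathlib

/-- A quantifier in an SSAT prefix: existential or randomized with probability `p`. -/
inductive SQ where
  | ex : SQ
  | rand : ℝ → SQ

/-- Validity of a quantifier: randomized quantifiers carry a probability `0 < p < 1`. -/
def SQ.valid : SQ → Prop
  | SQ.ex => True
  | SQ.rand p => 0 < p ∧ p < 1

open Classical in
/-- Maximum satisfaction probability of an SSAT formula, where `k` is the index of the
next variable to be bound and the matrix `φ` is a predicate on total assignments. -/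
noncomputable def PrSSAT : List SQ → ℕ → ((ℕ → Bool) → Prop) → ℝ
  | [], _, φ => if ∀ σ, φ σ then 1 else 0
  | SQ.ex :: Q, k, φ =>
      max (PrSSAT Q (k + 1) (fun σ => φ (Function.update σ k true)))
          (PrSSAT Q (k + 1) (fun σ => φ (Function.update σ k false)))
  | SQ.rand p :: Q, k, φ =>
      p * PrSSAT Q (k + 1) (fun σ => φ (Function.update σ k true))
      + (1 - p) * PrSSAT Q (k + 1) (fun σ => φ (Function.update σ k false))

/-- A (non-tautological) clause: each variable occurs at most once, with
`some true` a positive and `some false` a negative literal. -/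
abbrev Clause := ℕ → Option Bool

/-- The clause `c` is satisfied by assignment `σ`. -/
def clauseSat (c : Clause) (σ : ℕ → Bool) : Prop :=
  ∃ j : ℕ, ∃ b : Bool, c j = some b ∧ σ j = b

/-- `σ` agrees with the (unique) falsifying assignment of `c` on the variables of `c`. -/
def Falsifies (σ : ℕ → Bool) (c : Clause) : Prop :=
  ∀ j : ℕ, ∀ b : Bool, c j = some b → σ j = !b

/-- Satisfaction of a CNF, given as a list of clauses. -/
def cnfSat (φ : List Clause) (σ : ℕ → Bool) : Prop :=
  ∀ c ∈ φ, clauseSat c σ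

/-- S-resolution: derivation of annotated clauses `c^p` from the SSAT formula `Q : φ`. -/
inductive SRes (Q : List SQ) (φ : List Clause) : Clause → ℝ → Prop
  /-- R1: an original clause of `φ` is derived with annotation `0`. -/
  | orig (c : Clause) (hc : c ∈ φ) : SRes Q φ c 0
  /-- R2: if every assignment consistent with the falsifying assignment of `c`
  satisfies `φ`, then `c` is derived with annotation `1`. -/
  | sat (c : Clause)
      (hvar : ∀ j : ℕ, ∀ b : Bool, c j = some b → j < Q.length)
      (h : ∀ σ : ℕ → Bool, Falsifies σ c → cnfSat φ σ) :
      SRes Q φ c 1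
  /-- R3: resolution on the quantifier-maximal variable `x`, combining annotations
  by `max` for existential `x` and by the weighted average for randomized `x`. -/
  | res (d₁ d₂ : Clause) (p₁ p₂ : ℝ) (x : ℕ) (q : SQ) (p : ℝ)
      (h₁ : SRes Q φ d₁ p₁) (h₂ : SRes Q φ d₂ p₂)
      (hx1 : d₁ x = some false) (hx2 : d₂ x = some true)
      (hq : Q[x]? = some q)
      (hmax : ∀ j : ℕ, j ≠ x → (d₁ j ≠ none ∨ d₂ j ≠ none) → j < x)
      (hcompat : ∀ j : ℕ, j ≠ x → ∀ b : Bool, d₁ j = some b → d₂ j ≠ some (!b))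
      (hp : p = match q with
        | SQ.ex => max p₁ p₂
        | SQ.rand px => px * p₁ + (1 - px) * p₂) :
      SRes Q φ (fun j => if j = x then none else (d₁ j <|> d₂ j)) p


/-! ### Auxiliary definitions and lemmas for completeness -/

lemma opt_some_orElse {α : Type} (a : α) (b : Option α) : (some a <|> b) = some a := rfl

lemma opt_none_orElse {α : Type} (b : Option α) : (none <|> b) = b := rfl

lemma clauseSat_mono (c : Clause) (σ₁ σ₂ : ℕ → Bool)
    (h : ∀ j b, c j = some b → σ₁ j = σ₂ j) : clauseSat c σ₁ → clauseSat c σ₂ := by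
  rintro ⟨j, b, hj, hb⟩
  exact ⟨j, b, hj, by rw [← h j b hj]; exact hb⟩

lemma cnfSat_congr (φ : List Clause) (σ₁ σ₂ : ℕ → Bool)
    (h : ∀ c ∈ φ, ∀ j b, c j = some b → σ₁ j = σ₂ j) :
    cnfSat φ σ₁ ↔ cnfSat φ σ₂ := by
  constructor <;> intro hs c hc
  · exact clauseSat_mono c _ _ (h c hc) (hs c hc)
  · exact clauseSat_mono c _ _ (fun j b hj => (h c hc j b hj).symm) (hs c hc)

/-- Value of the subtree at level `k`, where variables below `k` are fixed by `τ`. -/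
noncomputable def V (Q : List SQ) (φ : List Clause) (k : ℕ) (τ : ℕ → Bool) : ℝ :=
  PrSSAT (Q.drop k) k (fun σ => cnfSat φ (fun j => if j < k then τ j else σ j))

lemma paste_update (τ σ : ℕ → Bool) (k : ℕ) (b : Bool) :
    (fun j => if j < k then τ j else (Function.update σ k b) j)
      = (fun j => if j < k + 1 then (Function.update τ k b) j else σ j) := by
  funext j
  rcases lt_trichotomy j k with h | h | h
  · rw [if_pos h, if_pos (Nat.lt_succ_of_lt h), Function.update_of_ne (Nat.ne_of_lt h)]
  · subst h
    rw [if_neg (lt_irrefl j), if_pos (Nat.lt_succ_self j), Function.update_self,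
      Function.update_self]
  · rw [if_neg (not_lt.2 h.le), if_neg (not_lt.2 h), Function.update_of_ne (Nat.ne_of_gt h)]

lemma V_rec (Q : List SQ) (φ : List Clause) (k : ℕ) (hk : k < Q.length) (τ : ℕ → Bool) :
    V Q φ k τ = (match Q[k] with
      | SQ.ex => max (V Q φ (k+1) (Function.update τ k true))
          (V Q φ (k+1) (Function.update τ k false))
      | SQ.rand px => px * V Q φ (k+1) (Function.update τ k true)
          + (1 - px) * V Q φ (k+1) (Function.update τ k false)) := by
  have key : ∀ b : Bool,
      (fun σ : ℕ → Bool => cnfSat φ (fun j => if j < k then τ j else (Function.update σ k b) j))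
      = (fun σ : ℕ → Bool =>
          cnfSat φ (fun j => if j < k + 1 then (Function.update τ k b) j else σ j)) := by
    intro b; funext σ; exact congrArg (cnfSat φ) (paste_update τ σ k b)
  unfold V
  rw [List.drop_eq_getElem_cons hk]
  cases Q[k] with
  | ex => simp only [PrSSAT]; rw [key true, key false]
  | rand px => simp only [PrSSAT]; rw [key true, key false]

open Classical in
lemma V_top (Q : List SQ) (φ : List Clause)
    (hvars : ∀ c ∈ φ, ∀ j : ℕ, ∀ b : Bool, c j = some b → j < Q.length)
    (τ : ℕ → Bool) : V Q φ Q.length τ = if cnfSat φ τ then 1 else 0 := by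
  have h : (∀ σ : ℕ → Bool, cnfSat φ (fun j => if j < Q.length then τ j else σ j))
      ↔ cnfSat φ τ := by
    constructor
    · intro h
      have := h τ
      simpa only [ite_self] using this
    · intro h σ
      exact (cnfSat_congr φ τ _ (fun c hc j b hj => (if_pos (hvars c hc j b hj)).symm)).mp h
  unfold V
  rw [List.drop_length]
  simp only [PrSSAT]
  exact if_congr h rfl rfl

/-- Lifting a derived clause not mentioning variable `k` from level `k+1` to level `k`. -/
lemma lift_none (Q : List SQ) (φ : List Clause) (k : ℕ) (hk : k < Q.length) (τ : ℕ → Bool)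
    (c : Clause) (v : ℝ) (b₀ : Bool)
    (hv : ∀ j b, c j = some b → j < k + 1)
    (hnone : c k = none)
    (hf : ∀ j b, c j = some b → Function.update τ k b₀ j = !b)
    (hS : SRes Q φ c v)
    (hE : ∀ τ' : ℕ → Bool, (∀ j b, c j = some b → τ' j = !b) → V Q φ (k+1) τ' = v) :
    (∀ j b, c j = some b → j < k) ∧ SRes Q φ c (V Q φ k τ) ∧
      (∀ τ' : ℕ → Bool, (∀ j b, c j = some b → τ' j = !b) → V Q φ k τ' = V Q φ k τ) ∧
      (∀ j b, c j = some b → τ j = !b) := by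
  have hjk : ∀ j b, c j = some b → j ≠ k := by
    intro j b hj h; subst h; rw [hnone] at hj; nomatch hj
  have hv' : ∀ j b, c j = some b → j < k := fun j b hj =>
    lt_of_le_of_ne (Nat.lt_succ_iff.mp (hv j b hj)) (hjk j b hj)
  have hfτ : ∀ j b, c j = some b → τ j = !b := by
    intro j b hj
    have := hf j b hj
    rwa [Function.update_of_ne (hjk j b hj)] at this
  have hVal : ∀ τ' : ℕ → Bool, (∀ j b, c j = some b → τ' j = !b) → V Q φ k τ' = v := by
    intro τ' hτ'
    have hb : ∀ b : Bool, V Q φ (k+1) (Function.update τ' k b) = v := by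
      intro b; apply hE; intro j b' hj
      rw [Function.update_of_ne (hjk j b' hj)]; exact hτ' j b' hj
    rw [V_rec Q φ k hk τ']
    cases Q[k] with
    | ex => rw [hb, hb, max_self]
    | rand px => rw [hb, hb]; ring
  have hVτ : V Q φ k τ = v := hVal τ hfτ
  refine ⟨hv', by rw [hVτ]; exact hS, fun τ' h => (hVal τ' h).trans hVτ.symm, hfτ⟩

/-- Main invariant: at every level `k` and partial assignment `τ`, some clause falsified
by `τ` with variables below `k` is derivable with annotation `V Q φ k τ`, and this
annotation is exact for every falsifying assignment. -/
lemma sres_main (Q : List SQ) (φ : List Clause)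
    (hvars : ∀ c ∈ φ, ∀ j : ℕ, ∀ b : Bool, c j = some b → j < Q.length) :
    ∀ n k, k + n = Q.length → ∀ τ : ℕ → Bool,
      ∃ c : Clause, (∀ j b, c j = some b → j < k) ∧ SRes Q φ c (V Q φ k τ) ∧
        (∀ τ' : ℕ → Bool, (∀ j b, c j = some b → τ' j = !b) → V Q φ k τ' = V Q φ k τ) ∧
        (∀ j b, c j = some b → τ j = !b) := by
  intro n
  induction n with
  | zero =>
    intro k hkn τ
    simp only [Nat.add_zero] at hkn
    subst hkn
    by_cases hsat : cnfSat φ τ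
    · -- use R2 with the full clause falsified exactly by τ
      refine ⟨fun j => if j < Q.length then some (!(τ j)) else none, ?_, ?_, ?_, ?_⟩
      · intro j b hj
        have hj' : (if j < Q.length then some (!(τ j)) else none) = some b := hj
        by_cases h : j < Q.length
        · exact h
        · rw [if_neg h] at hj'; nomatch hj'
      · rw [V_top Q φ hvars τ, if_pos hsat]
        refine SRes.sat _ ?_ ?_
        · intro j b hj
          have hj' : (if j < Q.length then some (!(τ j)) else none) = some b := hj
          by_cases h : j < Q.length
          · exact h
          · rw [if_neg h] at hj'; nomatch hj'
        · intro σ hσ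
          refine (cnfSat_congr φ τ σ ?_).mp hsat
          intro c hc j b hj
          have hjlt := hvars c hc j b hj
          have := hσ j (!(τ j)) (if_pos hjlt)
          rw [Bool.not_not] at this
          exact this.symm
      · intro τ' hτ'
        have hagree : ∀ j, j < Q.length → τ' j = τ j := by
          intro j hj
          have := hτ' j (!(τ j)) (if_pos hj)
          rwa [Bool.not_not] at this
        have hsat' : cnfSat φ τ' := by
          refine (cnfSat_congr φ τ τ' ?_).mp hsat
          intro c hc j b hj
          exact (hagree j (hvars c hc j b hj)).symm
        rw [V_top Q φ hvars τ', V_top Q φ hvars τ, if_pos hsat, if_pos hsat']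
      · intro j b hj
        have hj' : (if j < Q.length then some (!(τ j)) else none) = some b := hj
        by_cases h : j < Q.length
        · rw [if_pos h] at hj'
          have hb : (!(τ j)) = b := Option.some.inj hj'
          rw [← hb, Bool.not_not]
        · rw [if_neg h] at hj'; nomatch hj'
    · -- use R1 with some clause of φ falsified by τ
      rw [cnfSat] at hsat
      push_neg at hsat
      obtain ⟨c, hc, hcτ⟩ := hsat
      have hfal : ∀ j b, c j = some b → τ j = !b := by
        intro j b hj
        cases hb : τ j
        · cases b
          · exact absurd ⟨j, false, hj, hb⟩ hcτ
          · rfl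
        · cases b
          · rfl
          · exact absurd ⟨j, true, hj, hb⟩ hcτ
      have hzero : ∀ τ' : ℕ → Bool, (∀ j b, c j = some b → τ' j = !b) →
          V Q φ Q.length τ' = 0 := by
        intro τ' hτ'
        have : ¬ cnfSat φ τ' := by
          intro hs
          obtain ⟨j, b, hj, hb⟩ := hs c hc
          rw [hτ' j b hj] at hb
          exact (Bool.not_ne_self b) hb
        rw [V_top Q φ hvars τ', if_neg this]
      refine ⟨c, fun j b hj => hvars c hc j b hj, ?_, ?_, hfal⟩
      · rw [hzero τ hfal]; exact SRes.orig c hc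
      · intro τ' hτ'
        rw [hzero τ' hτ', hzero τ hfal]
  | succ n ih =>
    intro k hkn τ
    have hk : k < Q.length := by omega
    obtain ⟨ct, hctv, hctS, hctE, hctf⟩ := ih (k+1) (by omega) (Function.update τ k true)
    obtain ⟨cf, hcfv, hcfS, hcfE, hcff⟩ := ih (k+1) (by omega) (Function.update τ k false)
    have hctk : ct k = none ∨ ct k = some false := by
      cases h : ct k with
      | none => exact Or.inl rfl
      | some b =>
        have := hctf k b h
        rw [Function.update_self] at this
        cases b
        · exact Or.inr rfl
        · exact absurd this (by simp)
    have hcfk : cf k = none ∨ cf k = some true := by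
      cases h : cf k with
      | none => exact Or.inl rfl
      | some b =>
        have := hcff k b h
        rw [Function.update_self] at this
        cases b
        · exact absurd this (by simp)
        · exact Or.inr rfl
    rcases hctk with hct | hct
    · exact ⟨ct, lift_none Q φ k hk τ ct _ true hctv hct hctf hctS hctE⟩
    rcases hcfk with hcf | hcf
    · exact ⟨cf, lift_none Q φ k hk τ cf _ false hcfv hcf hcff hcfS hcfE⟩
    -- resolution case
    have hntk : ∀ j b, ct j = some b → j ≠ k → τ j = !b := by
      intro j b hj hjk
      have := hctf j b hj
      rwa [Function.update_of_ne hjk] at this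
    have hnfk : ∀ j b, cf j = some b → j ≠ k → τ j = !b := by
      intro j b hj hjk
      have := hcff j b hj
      rwa [Function.update_of_ne hjk] at this
    have hcompat : ∀ j : ℕ, j ≠ k → ∀ b : Bool, ct j = some b → cf j ≠ some (!b) := by
      intro j hjk b hb hb'
      have h1 := hntk j b hb hjk
      have h2 := hnfk j (!b) hb' hjk
      rw [Bool.not_not] at h2
      rw [h1] at h2
      exact (Bool.not_ne_self b) h2
    have hmax : ∀ j : ℕ, j ≠ k → (ct j ≠ none ∨ cf j ≠ none) → j < k := by
      intro j hjk hor
      rcases hor with h | h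
      · obtain ⟨b, hb⟩ := Option.ne_none_iff_exists'.mp h
        exact lt_of_le_of_ne (Nat.lt_succ_iff.mp (hctv j b hb)) hjk
      · obtain ⟨b, hb⟩ := Option.ne_none_iff_exists'.mp h
        exact lt_of_le_of_ne (Nat.lt_succ_iff.mp (hcfv j b hb)) hjk
    have horc : ∀ j b, (ct j <|> cf j) = some b → ct j = some b ∨ cf j = some b := by
      intro j b h
      cases hc : ct j with
      | none => rw [hc, opt_none_orElse] at h; exact Or.inr h
      | some a =>
        rw [hc, opt_some_orElse] at h
        exact Or.inl h
    obtain ⟨q, hq⟩ : ∃ q, Q[k]? = some q := ⟨Q[k], List.getElem?_eq_getElem hk⟩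
    have hQk : Q[k] = q := Option.some.inj ((List.getElem?_eq_getElem hk).symm.trans hq)
    have hres : SRes Q φ (fun j => if j = k then none else (ct j <|> cf j)) (V Q φ k τ) := by
      refine SRes.res ct cf _ _ k q _ hctS hcfS hct hcf hq hmax hcompat ?_
      rw [V_rec Q φ k hk τ, hQk]
      cases q <;> rfl
    refine ⟨fun j => if j = k then none else (ct j <|> cf j), ?_, hres, ?_, ?_⟩
    · intro j b hj
      have hj' : (if j = k then none else (ct j <|> cf j)) = some b := hj
      by_cases h : j = k
      · rw [if_pos h] at hj'; nomatch hj'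
      · rw [if_neg h] at hj'
        exact hmax j h (Or.imp (fun hb => by rw [hb]; simp) (fun hb => by rw [hb]; simp)
          (horc j b hj'))
    · intro τ' hτ'
      have hτ'or : ∀ j b, j ≠ k → (ct j = some b ∨ cf j = some b) → τ' j = !b := by
        intro j b hjk hor
        refine hτ' j b ?_
        show (if j = k then none else (ct j <|> cf j)) = some b
        rw [if_neg hjk]
        rcases hor with h | h
        · rw [h, opt_some_orElse]
        · cases hc : ct j with
          | none => rw [opt_none_orElse]; exact h
          | some a =>
            have hab : a = b := by
              have h1 := hntk j a hc hjk
              have h2 := hnfk j b h hjk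
              rw [h1] at h2
              exact Bool.not_inj h2
            rw [opt_some_orElse, hab]
      have het : V Q φ (k+1) (Function.update τ' k true)
          = V Q φ (k+1) (Function.update τ k true) := by
        apply hctE
        intro j b hj
        by_cases h : j = k
        · subst h
          rw [hct] at hj
          cases Option.some.injEq false b ▸ hj
          rw [Function.update_self]; rfl
        · rw [Function.update_of_ne h]
          exact hτ'or j b h (Or.inl hj)
      have hef : V Q φ (k+1) (Function.update τ' k false)
          = V Q φ (k+1) (Function.update τ k false) := by
        apply hcfE
        intro j b hj
        by_cases h : j = k
        · subst h
          rw [hcf] at hj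
          cases Option.some.injEq true b ▸ hj
          rw [Function.update_self]; rfl
        · rw [Function.update_of_ne h]
          exact hτ'or j b h (Or.inr hj)
      rw [V_rec Q φ k hk τ', V_rec Q φ k hk τ]
      cases Q[k] with
      | ex => rw [het, hef]
      | rand px => rw [het, hef]
    · intro j b hj
      have hj' : (if j = k then none else (ct j <|> cf j)) = some b := hj
      by_cases h : j = k
      · rw [if_pos h] at hj'; nomatch hj'
      · rw [if_neg h] at hj'
        rcases horc j b hj' with hb | hb
        · exact hntk j b hb h
        · exact hnfk j b hb h

theorem sres_complete (Q : List SQ) (φ : List Clause) (p : ℝ)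
    (hQ : ∀ q ∈ Q, q.valid)
    (hvars : ∀ c ∈ φ, ∀ j : ℕ, ∀ b : Bool, c j = some b → j < Q.length)
    (hPr : PrSSAT Q 0 (cnfSat φ) = p) :
    SRes Q φ (fun _ => none) p := by
  obtain ⟨c, hv, hS, _, _⟩ := sres_main Q φ hvars Q.length 0 (by simp) (fun _ => false)
  have hc : c = (fun _ => none) := by
    funext j
    cases hcj : c j with
    | none => rfl
    | some b => exact absurd (hv j b hcj) (Nat.not_lt_zero j)
  have hV : V Q φ 0 (fun _ => false) = p := by
    rw [← hPr]
    unfold V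
    have h2 : (fun σ : ℕ → Bool =>
        cnfSat φ (fun j => if j < 0 then (fun _ => false) j else σ j)) = cnfSat φ := by
      funext σ
      exact congrArg (cnfSat φ) (by funext j; simp)
    rw [List.drop_zero, h2]
  rw [← hV, ← hc]
  exact hS
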